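/- Let NF_n (n ≥ 2) be the null-filiform Leibniz algebra with [e_i,e_1] = e_{i+1}. If (d,D) is a biderivation of NF_n, writing d(e_1) = Σ α_j e_j and D(e_1) = Σ β_j e_j, then β_1 = α_1. Conversely, any pair (d,D) where d is a derivation determined by parameters α_1,…,α_n, D(e_1) = α_1 e_1 + Σ_{j=2}^n β_j e_j, and D(e_i) = 0 for i ≥ 2, is a biderivation of NF_n. -/
import Mathlib


def NFbr (n : ℕ) (x y : Fin n → ℂ) : Fin n → ℂ := fun i =>
  if _ : 1 ≤ (i : ℕ) then
    y ⟨0, Nat.lt_of_le_of_lt (Nat.zero_le _) i.isLt⟩ *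
      x ⟨(i : ℕ) - 1, Nat.lt_of_le_of_lt (Nat.sub_le _ _) i.isLt⟩
  else 0

def NFIsDer (n : ℕ) (d : (Fin n → ℂ) →ₗ[ℂ] (Fin n → ℂ)) : Prop :=
  ∀ x y, d (NFbr n x y) = NFbr n (d x) y + NFbr n x (d y)

def NFIsAntiDer (n : ℕ) (D : (Fin n → ℂ) →ₗ[ℂ] (Fin n → ℂ)) : Prop :=
  ∀ x y, D (NFbr n x y) = NFbr n (D x) y - NFbr n (D y) x

def NFCompat (n : ℕ) (d D : (Fin n → ℂ) →ₗ[ℂ] (Fin n → ℂ)) : Prop :=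
  ∀ x y, NFbr n x (d y) = NFbr n x (D y)

lemma NFrep {n : ℕ} (f : (Fin n → ℂ) →ₗ[ℂ] (Fin n → ℂ)) (x : Fin n → ℂ) (j : Fin n) :
    f x j = ∑ i, x i * f (Pi.single i 1) j := by
  rw [LinearMap.pi_apply_eq_sum_univ f x, Finset.sum_apply]
  refine Finset.sum_congr rfl fun i _ => ?_
  rw [Pi.smul_apply, smul_eq_mul]
  have h : (fun j => if i = j then (1:ℂ) else 0) = Pi.single i 1 := by
    funext k; simp [Pi.single_apply, eq_comm]
  rw [h]

lemma NFsum_shift (m : ℕ) (hn : 1 ≤ m)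
    (d : (Fin (m+1) → ℂ) →ₗ[ℂ] (Fin (m+1) → ℂ)) (α : Fin (m+1) → ℂ)
    (hd : ∀ i j : Fin (m+1), d (Pi.single i 1) j =
        if j = i then ((i : ℕ) + 1 : ℂ) * α ⟨0, by omega⟩
        else if (i : ℕ) < (j : ℕ) then
          α ⟨(j : ℕ) - (i : ℕ), Nat.lt_of_le_of_lt (Nat.sub_le _ _) j.isLt⟩
        else 0)
    (x : Fin (m+1) → ℂ) (k : Fin (m+1)) (hk : 1 ≤ (k:ℕ)) (hkm : (k:ℕ) - 1 < m + 1) :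
    (∑ i : Fin (m+1), if _ : 1 ≤ (i:ℕ) then
        x ⟨(i:ℕ)-1, by omega⟩ * d (Pi.single i 1) k else 0)
    = (∑ i : Fin (m+1), x i * d (Pi.single i 1) ⟨(k:ℕ)-1, hkm⟩)
      + α ⟨0, by omega⟩ * x ⟨(k:ℕ)-1, hkm⟩ := by
  have key : ((∑ i : Fin (m+1), x i * d (Pi.single i 1) ⟨(k:ℕ)-1, hkm⟩)
      + α ⟨0, by omega⟩ * x ⟨(k:ℕ)-1, hkm⟩)
      = ∑ i : Fin (m+1), (x i * d (Pi.single i 1) ⟨(k:ℕ)-1, hkm⟩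
          + if i = ⟨(k:ℕ)-1, hkm⟩ then α ⟨0, by omega⟩ * x i else 0) := by
    rw [Finset.sum_add_distrib, Finset.sum_ite_eq' Finset.univ ⟨(k:ℕ)-1, hkm⟩
      (fun i => α ⟨0, by omega⟩ * x i)]
    simp
  rw [key, Fin.sum_univ_succ, Fin.sum_univ_castSucc]
  have hfirst : (if _ : 1 ≤ ((0 : Fin (m+1)):ℕ) then
      x ⟨((0:Fin (m+1)):ℕ)-1, by omega⟩ * d (Pi.single (0:Fin (m+1)) 1) k else 0) = 0 := by
    simp
  rw [hfirst, zero_add]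
  have hlast : (x (Fin.last m) * d (Pi.single (Fin.last m) 1) ⟨(k:ℕ)-1, hkm⟩
      + if (Fin.last m) = ⟨(k:ℕ)-1, hkm⟩ then α ⟨0, by omega⟩ * x (Fin.last m) else 0) = 0 := by
    have hkle : (k:ℕ) ≤ m := by omega
    rw [hd]
    have h1 : ¬ ((⟨(k:ℕ)-1, hkm⟩ : Fin (m+1)) = Fin.last m) := by
      simp only [Fin.ext_iff, Fin.val_last]; omega
    have h2 : ¬ ((Fin.last m : ℕ) < (k:ℕ)-1) := by
      simp only [Fin.val_last]; omega
    have h3 : ¬ ((Fin.last m) = (⟨(k:ℕ)-1, hkm⟩ : Fin (m+1))) := fun h => h1 h.symm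
    simp [h1, h2, h3]
  rw [hlast, add_zero]
  refine Finset.sum_congr rfl fun i _ => ?_
  have hs : 1 ≤ ((i.succ : Fin (m+1)):ℕ) := by simp
  rw [dif_pos hs, hd, hd]
  have hxarg : (⟨((i.succ : Fin (m+1)):ℕ)-1, by omega⟩ : Fin (m+1)) = i.castSucc := by
    simp [Fin.ext_iff]
  rw [hxarg]
  have hiv : ((i.succ : Fin (m+1)):ℕ) = (i:ℕ) + 1 := rfl
  have hcv : ((i.castSucc : Fin (m+1)):ℕ) = (i:ℕ) := rfl
  by_cases hcase : (k:ℕ) = (i:ℕ) + 1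
  · have e1 : k = i.succ := by simp [Fin.ext_iff, hiv, hcase]
    have e2 : (⟨(k:ℕ)-1, hkm⟩ : Fin (m+1)) = i.castSucc := by
      simp [Fin.ext_iff, hcv]; omega
    have e3 : i.castSucc = (⟨(k:ℕ)-1, hkm⟩ : Fin (m+1)) := e2.symm
    rw [if_pos e1, if_pos e2, if_pos e3]
    rw [hiv, hcv]
    push_cast
    ring
  · have e1 : ¬ (k = i.succ) := by simp [Fin.ext_iff, hiv]; omega
    have e2 : ¬ ((⟨(k:ℕ)-1, hkm⟩ : Fin (m+1)) = i.castSucc) := by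
      simp [Fin.ext_iff, hcv]; omega
    have e3 : ¬ (i.castSucc = (⟨(k:ℕ)-1, hkm⟩ : Fin (m+1))) := fun h => e2 h.symm
    rw [if_neg e1, if_neg e2, if_neg e3]
    by_cases hlt : (i:ℕ) + 1 < (k:ℕ)
    · have hlt' : ((i.castSucc : Fin (m+1)):ℕ) < ((⟨(k:ℕ)-1, hkm⟩ : Fin (m+1)):ℕ) := by
        simp [hcv]; omega
      rw [if_pos (hiv ▸ hlt), if_pos hlt', add_zero]
      congr 1
      simp only [Fin.val_succ, Fin.coe_castSucc]
      congr 1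
      simp only [Fin.mk.injEq]
      omega
    · have h1 : ¬ (((i.succ : Fin (m+1)):ℕ) < (k:ℕ)) := by rw [hiv]; omega
      have h2 : ¬ (((i.castSucc : Fin (m+1)):ℕ) < ((⟨(k:ℕ)-1, hkm⟩:Fin (m+1)):ℕ)) := by
        simp [hcv]; omega
      rw [if_neg h1, if_neg h2]
      ring

/-- for a biderivation `(d,D)` of `NF_n` one has `β₁ = α₁`
(the `e_1`-coefficients of `D(e_1)` and `d(e_1)` agree); conversely, any pair
`(d, D)` with `d` a derivation given by parameters `α`, `D(e_1) = α₁ e_1 + ∑_{j≥2} β_j e_j`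
and `D(e_i) = 0` for `i ≥ 2` is a biderivation. -/
theorem NF_biderivation_characterization (n : ℕ) (hn : 2 ≤ n) :
    (∀ d D : (Fin n → ℂ) →ₗ[ℂ] (Fin n → ℂ),
      NFIsDer n d → NFIsAntiDer n D → NFCompat n d D →
      D (Pi.single ⟨0, by omega⟩ 1) ⟨0, by omega⟩ =
        d (Pi.single ⟨0, by omega⟩ 1) ⟨0, by omega⟩) ∧
    (∀ (d D : (Fin n → ℂ) →ₗ[ℂ] (Fin n → ℂ)) (α β : Fin n → ℂ),
      (∀ i j : Fin n, d (Pi.single i 1) j =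
        if j = i then ((i : ℕ) + 1 : ℂ) * α ⟨0, by omega⟩
        else if (i : ℕ) < (j : ℕ) then
          α ⟨(j : ℕ) - (i : ℕ), Nat.lt_of_le_of_lt (Nat.sub_le _ _) j.isLt⟩
        else 0) →
      (∀ j : Fin n, D (Pi.single ⟨0, by omega⟩ 1) j =
        if (j : ℕ) = 0 then α ⟨0, by omega⟩ else β j) →
      (∀ i : Fin n, 1 ≤ (i : ℕ) → D (Pi.single i 1) = 0) →
      NFIsDer n d ∧ NFIsAntiDer n D ∧ NFCompat n d D) := by
  constructor
  · intro d D hder hanti hc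
    have h1 := congrFun (hc (Pi.single ⟨0, by omega⟩ 1) (Pi.single ⟨0, by omega⟩ 1))
        ⟨1, by omega⟩
    simp [NFbr, Pi.single_apply] at h1
    exact h1.symm
  · intro d D α β hd hD1 hD0
    have h0 : (0:ℕ) < n := by omega
    set z : Fin n := ⟨0, h0⟩ with hz
    have factD : ∀ (y : Fin n → ℂ) (k : Fin n), D y k = y z * D (Pi.single z 1) k := by
      intro y k
      rw [NFrep]
      refine Finset.sum_eq_single z (fun i _ hi => ?_) (by simp)
      have h1 : 1 ≤ (i:ℕ) := by
        rcases Nat.eq_zero_or_pos (i:ℕ) with h | h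
        · exact absurd (Fin.ext h) hi
        · exact h
      rw [hD0 i h1]; simp
    have factd0 : ∀ (y : Fin n → ℂ), d y z = y z * α z := by
      intro y
      rw [NFrep]
      refine Finset.sum_eq_single z (fun i _ hi => ?_) (by simp) |>.trans ?_
      · rw [hd i z]
        have h1 : ¬ (z = i) := fun h => hi h.symm
        have h2 : ¬ ((i:ℕ) < (z:ℕ)) := Nat.not_lt_zero _
        simp [h1, h2]
      · rw [hd z z]; simp [hz]
    have hDe0 : D (Pi.single z 1) z = α z := by
      have := hD1 z; simpa [hz] using this
    refine ⟨?_, ?_, ?_⟩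
    · -- derivation
      intro x y
      funext k
      rw [Pi.add_apply]
      rcases Nat.lt_or_ge (k:ℕ) 1 with hk | hk
      · have hkz : k = z := Fin.ext (by show (k:ℕ) = 0; omega)
        subst hkz
        rw [NFrep]
        have hrhs1 : NFbr n (d x) y z = 0 := by simp [NFbr, hz]
        have hrhs2 : NFbr n x (d y) z = 0 := by simp [NFbr, hz]
        rw [hrhs1, hrhs2, add_zero]
        refine Finset.sum_eq_zero fun i _ => ?_
        rcases Nat.eq_zero_or_pos (i:ℕ) with h | h
        · have : i = z := Fin.ext (by show (i:ℕ) = 0; omega)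
          subst this
          simp [NFbr, hz]
        · rw [hd i z]
          have h1 : ¬ (z = i) := by intro hh; rw [← hh] at h; simp [hz] at h
          have h2 : ¬ ((i:ℕ) < (z:ℕ)) := Nat.not_lt_zero _
          simp [h1, h2]
      · obtain ⟨m, rfl⟩ : ∃ m, n = m + 1 := ⟨n - 1, by omega⟩
        have hm1 : 1 ≤ m := by omega
        have hkm : (k:ℕ) - 1 < m + 1 := by omega
        rw [NFrep]
        have hL : ∀ i : Fin (m+1), (NFbr (m+1) x y) i * d (Pi.single i 1) k =
            y z * (if _ : 1 ≤ (i:ℕ) then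
              x ⟨(i:ℕ)-1, by omega⟩ * d (Pi.single i 1) k else 0) := by
          intro i
          by_cases h : 1 ≤ (i:ℕ)
          · simp only [NFbr, dif_pos h, hz]
            ring
          · simp [NFbr, h]
        rw [Finset.sum_congr rfl (fun i _ => hL i), ← Finset.mul_sum]
        have hR : NFbr (m+1) (d x) y k + NFbr (m+1) x (d y) k =
            y z * ((∑ i, x i * d (Pi.single i 1) ⟨(k:ℕ)-1, hkm⟩)
              + α z * x ⟨(k:ℕ)-1, hkm⟩) := by
          simp only [NFbr, dif_pos hk]
          rw [factd0 y, NFrep d x ⟨(k:ℕ)-1, hkm⟩]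
          simp only [hz]
          ring
        rw [hR]
        congr 1
        exact NFsum_shift m hm1 d α hd x k hk hkm
    · -- antiderivation
      intro x y
      funext k
      rw [Pi.sub_apply]
      have hL : D (NFbr n x y) k = 0 := by
        rw [factD]
        have h00 : (NFbr n x y) z = 0 := by simp [NFbr, hz]
        rw [h00, zero_mul]
      rw [hL]
      by_cases h : 1 ≤ (k:ℕ)
      · have hkm : (k:ℕ) - 1 < n := by omega
        simp only [NFbr, dif_pos h]
        rw [factD x ⟨(k:ℕ)-1, hkm⟩, factD y ⟨(k:ℕ)-1, hkm⟩]
        simp only [hz]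
        ring
      · simp [NFbr, h]
    · -- compat
      intro x y
      funext k
      by_cases h : 1 ≤ (k:ℕ)
      · simp only [NFbr, dif_pos h]
        rw [factd0 y, factD y z, hDe0]
      · simp [NFbr, h]
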